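/- arXiv:2008.03489 — 2 statements merged into one kernel-verified Lean document; each statement's English description precedes it below -/
import Mathlib

section
/- For all ground first-order formulas F and G without equality such that F ⊨ G, there exists a ground formula H that is a Craig-Lyndon interpolant of F and G, i.e., F ⊨ H ⊨ G, pred(H) ⊆ pred(F) ∩ pred(G), and fun(H) ⊆ fun(F) ∩ fun(G). -/
open Classical

namespace CTIF

/-- First-order terms: variables and applications of function symbols
(a function symbol is a natural number used with an arity). -/
inductive Tm : Type where
  | var : ℕ → Tm
  | app : ℕ → (n : ℕ) → (Fin n → Tm) → Tm

/-- First-order formulas without equality. -/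
inductive Fml : Type where
  | tru : Fml
  | fls : Fml
  | atom : ℕ → (n : ℕ) → (Fin n → Tm) → Fml
  | neg : Fml → Fml
  | conj : Fml → Fml → Fml
  | disj : Fml → Fml → Fml
  | all : ℕ → Fml → Fml
  | exi : ℕ → Fml → Fml

/-- A structure: interpretation of all function and predicate symbols (at every arity). -/
structure Struc (D : Type) : Type where
  fn : ℕ → (n : ℕ) → (Fin n → D) → D
  pr : ℕ → (n : ℕ) → (Fin n → D) → Prop

def Tm.eval {D : Type} (M : Struc D) (a : ℕ → D) : Tm → D
  | .var x => a x
  | .app f n ts => M.fn f n (fun i => (ts i).eval M a)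

def Fml.sat {D : Type} : Fml → Struc D → (ℕ → D) → Prop
  | .tru, _, _ => True
  | .fls, _, _ => False
  | .atom p n ts, M, a => M.pr p n (fun i => (ts i).eval M a)
  | .neg F, M, a => ¬ F.sat M a
  | .conj F G, M, a => F.sat M a ∧ G.sat M a
  | .disj F G, M, a => F.sat M a ∨ G.sat M a
  | .all x F, M, a => ∀ d, F.sat M (Function.update a x d)
  | .exi x F, M, a => ∃ d, F.sat M (Function.update a x d)

/-- Entailment: every model (with any variable assignment) of `F` satisfies `G`. -/
def entails (F G : Fml) : Prop :=
  ∀ (D : Type), Nonempty D → ∀ (M : Struc D) (a : ℕ → D), F.sat M a → G.sat M a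

def Tm.vars : Tm → Set ℕ
  | .var x => {x}
  | .app _ _ ts => ⋃ i, (ts i).vars

/-- Function symbols (with their arity) occurring in a term. -/
def Tm.funs : Tm → Set (ℕ × ℕ)
  | .var _ => ∅
  | .app f n ts => insert (f, n) (⋃ i, (ts i).funs)

def Tm.isGround (t : Tm) : Prop := t.vars = ∅

/-- `t` is a ground term all of whose function symbols come from `S`. -/
def Tm.builtFrom (S : Set (ℕ × ℕ)) : Tm → Prop
  | .var _ => False
  | .app f n ts => (f, n) ∈ S ∧ ∀ i, Tm.builtFrom S (ts i)

/-- `t` occurs (as a subterm) in the given term. -/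
def Tm.occursIn (t : Tm) : Tm → Prop
  | .var x => t = Tm.var x
  | .app f n ts => t = Tm.app f n ts ∨ ∃ i, Tm.occursIn t (ts i)

/-- `s` is a strict subterm of `t`. -/
def Tm.strictSub (s t : Tm) : Prop := s ≠ t ∧ s.occursIn t

def Fml.funs : Fml → Set (ℕ × ℕ)
  | .tru => ∅
  | .fls => ∅
  | .atom _ _ ts => ⋃ i, (ts i).funs
  | .neg F => F.funs
  | .conj F G => F.funs ∪ G.funs
  | .disj F G => F.funs ∪ G.funs
  | .all _ F => F.funs
  | .exi _ F => F.funs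

/-- Predicate symbols with the polarity (`true` = positive) of their occurrences;
the second argument is the polarity of the context. -/
def Fml.preds : Fml → Bool → Set (ℕ × Bool)
  | .tru, _ => ∅
  | .fls, _ => ∅
  | .atom p _ _, pol => {(p, pol)}
  | .neg F, pol => F.preds (!pol)
  | .conj F G, pol => F.preds pol ∪ G.preds pol
  | .disj F G, pol => F.preds pol ∪ G.preds pol
  | .all _ F, pol => F.preds pol
  | .exi _ F, pol => F.preds pol

/-- pred(F): predicates paired with the polarities of their occurrences in `F`. -/
def Fml.pred (F : Fml) : Set (ℕ × Bool) := F.preds true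

/-- Predicate symbols occurring in a formula (disregarding polarity). -/
def Fml.predSyms : Fml → Set ℕ
  | .tru => ∅
  | .fls => ∅
  | .atom p _ _ => {p}
  | .neg F => F.predSyms
  | .conj F G => F.predSyms ∪ G.predSyms
  | .disj F G => F.predSyms ∪ G.predSyms
  | .all _ F => F.predSyms
  | .exi _ F => F.predSyms

def Fml.free : Fml → Set ℕ
  | .tru => ∅
  | .fls => ∅
  | .atom _ _ ts => ⋃ i, (ts i).vars
  | .neg F => F.free
  | .conj F G => F.free ∪ G.free
  | .disj F G => F.free ∪ G.free
  | .all x F => F.free \ {x}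
  | .exi x F => F.free \ {x}

/-- Variables occurring bound (i.e. quantified upon) in a formula. -/
def Fml.bound : Fml → Set ℕ
  | .tru => ∅
  | .fls => ∅
  | .atom _ _ _ => ∅
  | .neg F => F.bound
  | .conj F G => F.bound ∪ G.bound
  | .disj F G => F.bound ∪ G.bound
  | .all x F => insert x F.bound
  | .exi x F => insert x F.bound

def Fml.isQF : Fml → Prop
  | .tru => True
  | .fls => True
  | .atom _ _ _ => True
  | .neg F => F.isQF
  | .conj F G => F.isQF ∧ G.isQF
  | .disj F G => F.isQF ∧ G.isQF
  | .all _ _ => False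
  | .exi _ _ => False

def Fml.isGround (F : Fml) : Prop := F.isQF ∧ F.free = ∅

def Fml.isSentence (F : Fml) : Prop := F.free = ∅

/-- Substitutions: mappings from variables to terms. -/
abbrev Subst := ℕ → Tm

def Subst.dom (σ : Subst) : Set ℕ := {x | σ x ≠ Tm.var x}

def Subst.rng (σ : Subst) : Set Tm := {t | ∃ x ∈ σ.dom, σ x = t}

def Subst.isGround (σ : Subst) : Prop := ∀ x ∈ σ.dom, (σ x).isGround

/-- Injective substitution: distinct domain variables are mapped to distinct terms. -/
def Subst.inj (σ : Subst) : Prop := ∀ x ∈ σ.dom, ∀ y ∈ σ.dom, σ x = σ y → x = y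

def Tm.subst (σ : Subst) : Tm → Tm
  | .var x => σ x
  | .app f n ts => .app f n (fun i => (ts i).subst σ)

/-- Substitution application to formulas (free occurrences of variables are replaced). -/
def Fml.subst (σ : Subst) : Fml → Fml
  | .tru => .tru
  | .fls => .fls
  | .atom p n ts => .atom p n (fun i => (ts i).subst σ)
  | .neg F => .neg (F.subst σ)
  | .conj F G => .conj (F.subst σ) (G.subst σ)
  | .disj F G => .disj (F.subst σ) (G.subst σ)
  | .all x F => .all x (F.subst (Function.update σ x (Tm.var x)))
  | .exi x F => .exi x (F.subst (Function.update σ x (Tm.var x)))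

/-- Inverse application of an injective substitution to a term:
all rng(σ)-maximal occurrences of terms in the range of σ are replaced by
the corresponding domain variable. -/
noncomputable def Tm.inv (σ : Subst) : Tm → Tm
  | .var x =>
      if h : ∃ v ∈ Subst.dom σ, σ v = Tm.var x then Tm.var h.choose else Tm.var x
  | .app f n ts =>
      if h : ∃ v ∈ Subst.dom σ, σ v = Tm.app f n ts then Tm.var h.choose
      else .app f n (fun i => Tm.inv σ (ts i))

/-- Inverse application of an injective substitution to a formula. -/
noncomputable def Fml.inv (σ : Subst) : Fml → Fml
  | .tru => .tru
  | .fls => .fls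
  | .atom p n ts => .atom p n (fun i => Tm.inv σ (ts i))
  | .neg F => .neg (F.inv σ)
  | .conj F G => .conj (F.inv σ) (G.inv σ)
  | .disj F G => .disj (F.inv σ) (G.inv σ)
  | .all x F => .all x (F.inv σ)
  | .exi x F => .exi x (F.inv σ)

/-- `H` is a Craig-Lyndon interpolant of `F` and `G`. -/
def CLInterp (F G H : Fml) : Prop :=
  entails F H ∧ entails H G ∧
  H.pred ⊆ F.pred ∩ G.pred ∧
  H.funs ⊆ F.funs ∩ G.funs ∧
  H.free ⊆ F.free ∩ G.free

/-- `H` is a Craig interpolant of `F` and `G` (no polarity constraint). -/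
def CraigInterp (F G H : Fml) : Prop :=
  entails F H ∧ entails H G ∧
  H.predSyms ⊆ F.predSyms ∩ G.predSyms ∧
  H.funs ⊆ F.funs ∩ G.funs ∧
  H.free ⊆ F.free ∩ G.free

/-- An S-term: a term whose outermost function symbol is in `S`. -/
def isSTerm (S : Set (ℕ × ℕ)) : Tm → Prop
  | .var _ => False
  | .app f n _ => (f, n) ∈ S

def STerms (S : Set (ℕ × ℕ)) : Set Tm := {t | isSTerm S t}

/-- `t` has a `T`-maximal occurrence in the given term: an occurrence that is
not within an occurrence of another member of `T`. -/
def Tm.hasMaxOcc (T : Set Tm) (t : Tm) : Tm → Prop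
  | .var x => Tm.var x ∈ T ∧ t = Tm.var x
  | .app f n ts =>
      (Tm.app f n ts ∈ T ∧ t = Tm.app f n ts) ∨
      (Tm.app f n ts ∉ T ∧ ∃ i, Tm.hasMaxOcc T t (ts i))

/-- `t` has a `T`-maximal occurrence in the formula. -/
def Fml.hasMaxOcc (T : Set Tm) (t : Tm) : Fml → Prop
  | .tru => False
  | .fls => False
  | .atom _ _ ts => ∃ i, Tm.hasMaxOcc T t (ts i)
  | .neg F => F.hasMaxOcc T t
  | .conj F G => F.hasMaxOcc T t ∨ G.hasMaxOcc T t
  | .disj F G => F.hasMaxOcc T t ∨ G.hasMaxOcc T t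
  | .all _ F => F.hasMaxOcc T t
  | .exi _ F => F.hasMaxOcc T t

/-- Universal quantification over a list of variables. -/
def alls (xs : List ℕ) (F : Fml) : Fml := xs.foldr Fml.all F

end CTIF
namespace CTIF

/-- Ground atoms as triples. -/
abbrev Atom := Σ p : ℕ, Σ n : ℕ, Fin n → Tm

abbrev Val := Atom → Prop

noncomputable def lit (α : Atom) : Fml := .atom α.1 α.2.1 α.2.2

def afuns (α : Atom) : Set (ℕ × ℕ) := ⋃ i, (α.2.2 i).funs

def avars (α : Atom) : Set ℕ := ⋃ i, (α.2.2 i).vars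

/-- Propositional satisfaction (meaningful on quantifier-free formulas). -/
def psat : Fml → Val → Prop
  | .tru, _ => True
  | .fls, _ => False
  | .atom p n ts, v => v ⟨p, n, ts⟩
  | .neg F, v => ¬ psat F v
  | .conj F G, v => psat F v ∧ psat G v
  | .disj F G, v => psat F v ∨ psat G v
  | .all _ F, v => psat F v
  | .exi _ F, v => psat F v

/-- Atom occurrences with polarities. -/
def Fml.apreds : Fml → Bool → Set (Atom × Bool)
  | .tru, _ => ∅
  | .fls, _ => ∅
  | .atom p n ts, pol => {(⟨p, n, ts⟩, pol)}
  | .neg F, pol => F.apreds (!pol)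
  | .conj F G, pol => F.apreds pol ∪ G.apreds pol
  | .disj F G, pol => F.apreds pol ∪ G.apreds pol
  | .all _ F, pol => F.apreds pol
  | .exi _ F, pol => F.apreds pol

def Fml.atomsL : Fml → List Atom
  | .tru => []
  | .fls => []
  | .atom p n ts => [⟨p, n, ts⟩]
  | .neg F => F.atomsL
  | .conj F G => F.atomsL ++ G.atomsL
  | .disj F G => F.atomsL ++ G.atomsL
  | .all _ F => F.atomsL
  | .exi _ F => F.atomsL

noncomputable def subst2 (α : Atom) (R : Fml) : Fml → Fml
  | .tru => .tru
  | .fls => .fls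
  | .atom p n ts => if (⟨p, n, ts⟩ : Atom) = α then R else .atom p n ts
  | .neg F => .neg (subst2 α R F)
  | .conj F G => .conj (subst2 α R F) (subst2 α R G)
  | .disj F G => .disj (subst2 α R F) (subst2 α R G)
  | .all x F => .all x (subst2 α R F)
  | .exi x F => .exi x (subst2 α R F)

def prOf {D : Type} (M : Struc D) (a : ℕ → D) : Val :=
  fun α => M.pr α.1 α.2.1 (fun i => (α.2.2 i).eval M a)

noncomputable def termM (v : Val) : Struc Tm :=
  ⟨fun f n ts => .app f n ts, fun p n ts => v ⟨p, n, ts⟩⟩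

lemma eval_termM (v : Val) (t : Tm) : t.eval (termM v) (fun x => Tm.var x) = t := by
  induction t with
  | var x => rfl
  | app f n ts ih =>
      show Tm.app f n _ = _
      congr 1; funext i; exact ih i

lemma sat_iff_psat {D : Type} (M : Struc D) (a : ℕ → D) :
    ∀ F : Fml, F.isQF → (F.sat M a ↔ psat F (prOf M a)) := by
  intro F
  induction F with
  | tru => intro _; rfl
  | fls => intro _; rfl
  | atom p n ts => intro _; rfl
  | neg F ih => intro h; exact not_congr (ih h)
  | conj F G ihF ihG => intro h; exact and_congr (ihF h.1) (ihG h.2)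
  | disj F G ihF ihG => intro h; exact or_congr (ihF h.1) (ihG h.2)
  | all x F ih => intro h; exact absurd h not_false
  | exi x F ih => intro h; exact absurd h not_false

lemma prOf_termM (v : Val) : prOf (termM v) (fun x => Tm.var x) = v := by
  funext α
  show v ⟨α.1, α.2.1, fun i => (α.2.2 i).eval (termM v) _⟩ = v α
  have : (fun i => (α.2.2 i).eval (termM v) (fun x => Tm.var x)) = α.2.2 := by
    funext i; exact eval_termM v (α.2.2 i)
  rw [this]

lemma entails_iff_pentails (F G : Fml) (hF : F.isQF) (hG : G.isQF) :
    entails F G ↔ ∀ v : Val, psat F v → psat G v := by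
  constructor
  · intro h v hv
    have h1 := h Tm ⟨Tm.var 0⟩ (termM v) (fun x => Tm.var x)
    rw [sat_iff_psat _ _ F hF, sat_iff_psat _ _ G hG, prOf_termM] at h1
    exact h1 hv
  · intro h D _ M a hFa
    rw [sat_iff_psat _ _ G hG]
    exact h _ ((sat_iff_psat _ _ F hF).1 hFa)

/-- Core monotonicity (semantic Lyndon lemma). -/
lemma mono : ∀ (F : Fml) (pol : Bool) (v w : Val),
    (∀ x ∈ F.apreds pol, (x.2 = true → (v x.1 → w x.1)) ∧ (x.2 = false → (w x.1 → v x.1))) →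
    (pol = true → (psat F v → psat F w)) ∧ (pol = false → (psat F w → psat F v)) := by
  intro F
  induction F with
  | tru => intro pol v w _; exact ⟨fun _ h => h, fun _ h => h⟩
  | fls => intro pol v w _; exact ⟨fun _ h => h, fun _ h => h⟩
  | atom p n ts =>
      intro pol v w h
      have := h (⟨p, n, ts⟩, pol) rfl
      cases pol with
      | true => exact ⟨fun _ => this.1 rfl, fun hc => Bool.noConfusion hc⟩
      | false => exact ⟨fun hc => Bool.noConfusion hc, fun _ => this.2 rfl⟩
  | neg F ih =>
      intro pol v w h
      have h' := ih (!pol) v w h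
      cases pol with
      | true => exact ⟨fun _ hv hw => hv (h'.2 rfl hw), fun hc => Bool.noConfusion hc⟩
      | false => exact ⟨fun hc => Bool.noConfusion hc, fun _ hw hv => hw (h'.1 rfl hv)⟩
  | conj F G ihF ihG =>
      intro pol v w h
      have hF := ihF pol v w (fun x hx => h x (Or.inl hx))
      have hG := ihG pol v w (fun x hx => h x (Or.inr hx))
      exact ⟨fun hp hv => ⟨hF.1 hp hv.1, hG.1 hp hv.2⟩,
             fun hp hv => ⟨hF.2 hp hv.1, hG.2 hp hv.2⟩⟩
  | disj F G ihF ihG =>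
      intro pol v w h
      have hF := ihF pol v w (fun x hx => h x (Or.inl hx))
      have hG := ihG pol v w (fun x hx => h x (Or.inr hx))
      exact ⟨fun hp hv => hv.imp (hF.1 hp) (hG.1 hp),
             fun hp hv => hv.imp (hF.2 hp) (hG.2 hp)⟩
  | all x F ih => intro pol v w h; exact ih pol v w h
  | exi x F ih => intro pol v w h; exact ih pol v w h

lemma psat_mono_true (F : Fml) (v w : Val)
    (h : ∀ x ∈ F.apreds true, (x.2 = true → (v x.1 → w x.1)) ∧ (x.2 = false → (w x.1 → v x.1))) :
    psat F v → psat F w := (mono F true v w h).1 rfl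

/-- psat of subst2. -/
lemma psat_subst2 (α : Atom) (R : Fml) (v : Val) :
    ∀ F : Fml, psat (subst2 α R F) v ↔ psat F (Function.update v α (psat R v)) := by
  intro F
  induction F with
  | tru => rfl
  | fls => rfl
  | atom p n ts =>
      show psat (if (⟨p, n, ts⟩ : Atom) = α then R else .atom p n ts) v ↔
        Function.update v α (psat R v) ⟨p, n, ts⟩
      by_cases hc : (⟨p, n, ts⟩ : Atom) = α
      · subst hc; rw [if_pos rfl, Function.update_self]
      · rw [if_neg hc, Function.update_of_ne hc]; rfl
  | neg F ih => exact not_congr ih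
  | conj F G ihF ihG => exact and_congr ihF ihG
  | disj F G ihF ihG => exact or_congr ihF ihG
  | all x F ih => exact ih
  | exi x F ih => exact ih

lemma apreds_subst2 (α : Atom) (R : Fml) (hR : R = .tru ∨ R = .fls) :
    ∀ (F : Fml) (pol : Bool), (subst2 α R F).apreds pol ⊆ {x ∈ F.apreds pol | x.1 ≠ α} := by
  intro F
  induction F with
  | tru => intro pol x hx; exact absurd hx (by simp [subst2, Fml.apreds])
  | fls => intro pol x hx; exact absurd hx (by simp [subst2, Fml.apreds])
  | atom p n ts =>
      intro pol x hx
      by_cases hc : (⟨p, n, ts⟩ : Atom) = α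
      · exfalso
        simp only [subst2, if_pos hc] at hx
        rcases hR with h | h <;> (subst h; exact hx)
      · simp only [subst2, if_neg hc] at hx
        exact ⟨hx, by rcases hx with rfl; exact hc⟩
  | neg F ih => intro pol; exact ih (!pol)
  | conj F G ihF ihG =>
      intro pol x hx
      rcases hx with hx | hx
      · exact ⟨Or.inl (ihF pol hx).1, (ihF pol hx).2⟩
      · exact ⟨Or.inr (ihG pol hx).1, (ihG pol hx).2⟩
  | disj F G ihF ihG =>
      intro pol x hx
      rcases hx with hx | hx
      · exact ⟨Or.inl (ihF pol hx).1, (ihF pol hx).2⟩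
      · exact ⟨Or.inr (ihG pol hx).1, (ihG pol hx).2⟩
  | all x F ih => exact ih
  | exi x F ih => exact ih

lemma funs_subst2 (α : Atom) (R : Fml) (hR : R = .tru ∨ R = .fls) :
    ∀ F : Fml, (subst2 α R F).funs ⊆ F.funs := by
  intro F
  induction F with
  | tru => exact subset_rfl
  | fls => exact subset_rfl
  | atom p n ts =>
      by_cases hc : (⟨p, n, ts⟩ : Atom) = α
      · simp only [subst2, if_pos hc]
        rcases hR with h | h <;> (subst h; intro x hx; exact absurd hx (Set.notMem_empty x))
      · simp only [subst2, if_neg hc]; exact subset_rfl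
  | neg F ih => exact ih
  | conj F G ihF ihG => exact Set.union_subset_union ihF ihG
  | disj F G ihF ihG => exact Set.union_subset_union ihF ihG
  | all x F ih => exact ih
  | exi x F ih => exact ih

lemma free_subst2 (α : Atom) (R : Fml) (hR : R = .tru ∨ R = .fls) :
    ∀ F : Fml, (subst2 α R F).free ⊆ F.free := by
  intro F
  induction F with
  | tru => exact subset_rfl
  | fls => exact subset_rfl
  | atom p n ts =>
      by_cases hc : (⟨p, n, ts⟩ : Atom) = α
      · simp only [subst2, if_pos hc]
        rcases hR with h | h <;> (subst h; intro x hx; exact absurd hx (Set.notMem_empty x))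
      · simp only [subst2, if_neg hc]; exact subset_rfl
  | neg F ih => exact ih
  | conj F G ihF ihG => exact Set.union_subset_union ihF ihG
  | disj F G ihF ihG => exact Set.union_subset_union ihF ihG
  | all x F ih => exact Set.diff_subset_diff_left ih
  | exi x F ih => exact Set.diff_subset_diff_left ih

lemma isQF_subst2 (α : Atom) (R : Fml) (hR : R = .tru ∨ R = .fls) :
    ∀ F : Fml, F.isQF → (subst2 α R F).isQF := by
  intro F
  induction F with
  | tru => intro _; trivial
  | fls => intro _; trivial
  | atom p n ts =>
      intro _
      by_cases hc : (⟨p, n, ts⟩ : Atom) = α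
      · simp only [subst2, if_pos hc]
        rcases hR with h | h <;> (subst h; trivial)
      · simp only [subst2, if_neg hc]; trivial
  | neg F ih => exact ih
  | conj F G ihF ihG => intro h; exact ⟨ihF h.1, ihG h.2⟩
  | disj F G ihF ihG => intro h; exact ⟨ihF h.1, ihG h.2⟩
  | all x F ih => intro h; exact absurd h not_false
  | exi x F ih => intro h; exact absurd h not_false

lemma apreds_pred : ∀ (F : Fml) (pol : Bool) (x : Atom × Bool),
    x ∈ F.apreds pol → (x.1.1, x.2) ∈ F.preds pol := by
  intro F
  induction F with
  | tru => intro pol x hx; exact absurd hx (Set.notMem_empty x)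
  | fls => intro pol x hx; exact absurd hx (Set.notMem_empty x)
  | atom p n ts => intro pol x hx; rcases hx with rfl; rfl
  | neg F ih => intro pol; exact ih (!pol)
  | conj F G ihF ihG =>
      intro pol x hx; exact hx.imp (ihF pol x) (ihG pol x)
  | disj F G ihF ihG =>
      intro pol x hx; exact hx.imp (ihF pol x) (ihG pol x)
  | all y F ih => exact ih
  | exi y F ih => exact ih

lemma apreds_funs : ∀ (F : Fml) (pol : Bool) (x : Atom × Bool),
    x ∈ F.apreds pol → afuns x.1 ⊆ F.funs := by
  intro F
  induction F with
  | tru => intro pol x hx; exact absurd hx (Set.notMem_empty x)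
  | fls => intro pol x hx; exact absurd hx (Set.notMem_empty x)
  | atom p n ts => intro pol x hx; rcases hx with rfl; exact subset_rfl
  | neg F ih => intro pol; exact ih (!pol)
  | conj F G ihF ihG =>
      intro pol x hx
      rcases hx with hx | hx
      · exact (ihF pol x hx).trans Set.subset_union_left
      · exact (ihG pol x hx).trans Set.subset_union_right
  | disj F G ihF ihG =>
      intro pol x hx
      rcases hx with hx | hx
      · exact (ihF pol x hx).trans Set.subset_union_left
      · exact (ihG pol x hx).trans Set.subset_union_right
  | all y F ih => exact ih
  | exi y F ih => exact ih

lemma preds_exists : ∀ (F : Fml) (pol : Bool) (p : ℕ) (b : Bool),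
    (p, b) ∈ F.preds pol → ∃ n ts, ((⟨p, n, ts⟩ : Atom), b) ∈ F.apreds pol := by
  intro F
  induction F with
  | tru => intro pol p b hx; exact absurd hx (Set.notMem_empty _)
  | fls => intro pol p b hx; exact absurd hx (Set.notMem_empty _)
  | atom q n ts =>
      intro pol p b hx
      have h1 : p = q ∧ b = pol := Prod.mk.injEq .. ▸ hx
      rcases h1 with ⟨rfl, rfl⟩
      exact ⟨n, ts, rfl⟩
  | neg F ih => intro pol; exact ih (!pol)
  | conj F G ihF ihG =>
      intro pol p b hx
      rcases hx with hx | hx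
      · rcases ihF pol p b hx with ⟨n, ts, h⟩; exact ⟨n, ts, Or.inl h⟩
      · rcases ihG pol p b hx with ⟨n, ts, h⟩; exact ⟨n, ts, Or.inr h⟩
  | disj F G ihF ihG =>
      intro pol p b hx
      rcases hx with hx | hx
      · rcases ihF pol p b hx with ⟨n, ts, h⟩; exact ⟨n, ts, Or.inl h⟩
      · rcases ihG pol p b hx with ⟨n, ts, h⟩; exact ⟨n, ts, Or.inr h⟩
  | all y F ih => exact ih
  | exi y F ih => exact ih

lemma funs_exists : ∀ (F : Fml) (pol : Bool) (y : ℕ × ℕ),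
    y ∈ F.funs → ∃ x ∈ F.apreds pol, y ∈ afuns x.1 := by
  intro F
  induction F with
  | tru => intro pol y hy; exact absurd hy (Set.notMem_empty _)
  | fls => intro pol y hy; exact absurd hy (Set.notMem_empty _)
  | atom p n ts => intro pol y hy; exact ⟨(⟨p, n, ts⟩, pol), rfl, hy⟩
  | neg F ih => intro pol; exact ih (!pol)
  | conj F G ihF ihG =>
      intro pol y hy
      rcases hy with hy | hy
      · rcases ihF pol y hy with ⟨x, h1, h2⟩; exact ⟨x, Or.inl h1, h2⟩
      · rcases ihG pol y hy with ⟨x, h1, h2⟩; exact ⟨x, Or.inr h1, h2⟩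
  | disj F G ihF ihG =>
      intro pol y hy
      rcases hy with hy | hy
      · rcases ihF pol y hy with ⟨x, h1, h2⟩; exact ⟨x, Or.inl h1, h2⟩
      · rcases ihG pol y hy with ⟨x, h1, h2⟩; exact ⟨x, Or.inr h1, h2⟩
  | all y F ih => exact ih
  | exi y F ih => exact ih

lemma apreds_atomsL : ∀ (F : Fml) (pol : Bool) (x : Atom × Bool),
    x ∈ F.apreds pol → x.1 ∈ F.atomsL := by
  intro F
  induction F with
  | tru => intro pol x hx; exact absurd hx (Set.notMem_empty _)
  | fls => intro pol x hx; exact absurd hx (Set.notMem_empty _)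
  | atom p n ts => intro pol x hx; rcases hx with rfl; exact List.mem_singleton.2 rfl
  | neg F ih => intro pol; exact ih (!pol)
  | conj F G ihF ihG =>
      intro pol x hx
      rcases hx with hx | hx
      · exact List.mem_append.2 (Or.inl (ihF pol x hx))
      · exact List.mem_append.2 (Or.inr (ihG pol x hx))
  | disj F G ihF ihG =>
      intro pol x hx
      rcases hx with hx | hx
      · exact List.mem_append.2 (Or.inl (ihF pol x hx))
      · exact List.mem_append.2 (Or.inr (ihG pol x hx))
  | all y F ih => exact ih
  | exi y F ih => exact ih

lemma atomsL_vars : ∀ F : Fml, F.isQF → ∀ α ∈ F.atomsL, avars α ⊆ F.free := by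
  intro F
  induction F with
  | tru => intro _ α hα; exact absurd hα (List.not_mem_nil (a := α))
  | fls => intro _ α hα; exact absurd hα (List.not_mem_nil (a := α))
  | atom p n ts =>
      intro _ α hα
      rcases List.mem_singleton.1 hα with rfl
      exact subset_rfl
  | neg F ih => exact ih
  | conj F G ihF ihG =>
      intro h α hα
      rcases List.mem_append.1 hα with hα | hα
      · exact (ihF h.1 α hα).trans Set.subset_union_left
      · exact (ihG h.2 α hα).trans Set.subset_union_right
  | disj F G ihF ihG =>
      intro h α hα
      rcases List.mem_append.1 hα with hα | hα
      · exact (ihF h.1 α hα).trans Set.subset_union_left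
      · exact (ihG h.2 α hα).trans Set.subset_union_right
  | all y F ih => intro h; exact absurd h not_false
  | exi y F ih => intro h; exact absurd h not_false

lemma psat_update_out (F' : Fml) (v : Val) (α : Atom) (c : Prop)
    (h : ∀ b : Bool, (α, b) ∈ F'.apreds true →
      (b = true → (c → v α)) ∧ (b = false → (v α → c))) :
    psat F' (Function.update v α c) → psat F' v := by
  apply psat_mono_true
  rintro ⟨β, b⟩ hx
  by_cases hβ : β = α
  · subst hβ
    refine ⟨fun hb hc => ?_, fun hb hv => ?_⟩
    · rw [Function.update_self] at hc; exact (h b hx).1 hb hc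
    · rw [Function.update_self]; exact (h b hx).2 hb hv
  · exact ⟨fun _ => by rw [Function.update_of_ne hβ]; exact id,
           fun _ => by rw [Function.update_of_ne hβ]; exact id⟩

lemma psat_update_in (F' : Fml) (v : Val) (α : Atom) (c : Prop)
    (h : ∀ b : Bool, (α, b) ∈ F'.apreds true →
      (b = true → (v α → c)) ∧ (b = false → (c → v α))) :
    psat F' v → psat F' (Function.update v α c) := by
  apply psat_mono_true
  rintro ⟨β, b⟩ hx
  by_cases hβ : β = α
  · subst hβ
    refine ⟨fun hb hv => ?_, fun hb hc => ?_⟩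
    · rw [Function.update_self]; exact (h b hx).1 hb hv
    · rw [Function.update_self] at hc; exact (h b hx).2 hb hc
  · exact ⟨fun _ => by rw [Function.update_of_ne hβ]; exact id,
           fun _ => by rw [Function.update_of_ne hβ]; exact id⟩

def allowA (F G : Fml) (α : Atom) (b : Bool) : Prop :=
  ((α.1, b) ∈ F.pred ∧ afuns α ⊆ F.funs) ∧ ((α.1, b) ∈ G.pred ∧ afuns α ⊆ G.funs)

def GoodA (F G : Fml) : Set (Atom × Bool) := {x | allowA F G x.1 x.2}

def PF (F : Fml) : Set (Atom × Bool) := {x | (x.1.1, x.2) ∈ F.pred ∧ afuns x.1 ⊆ F.funs}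

noncomputable def stepF (F G : Fml) (α : Atom) (F' : Fml) : Fml :=
  .disj (.conj (subst2 α .tru F') (if allowA F G α true then lit α else .tru))
        (.conj (subst2 α .fls F') (if allowA F G α false then .neg (lit α) else .tru))

noncomputable def elimA (F G : Fml) : List Atom → Fml → Fml
  | [], F' => F'
  | a :: L, F' => elimA F G L (stepF F G a F')

lemma step_sound (F G : Fml) (α : Atom) (F' : Fml) (v : Val)
    (hv : psat F' v) : psat (stepF F G α F') v := by
  by_cases hva : v α
  · refine Or.inl ⟨?_, ?_⟩
    · exact (psat_subst2 α .tru v F').2 (psat_update_in F' v α True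
        (fun b _ => ⟨fun _ _ => trivial, fun _ _ => hva⟩) hv)
    · show psat (if allowA F G α true then lit α else .tru) v
      split_ifs with h
      · exact hva
      · trivial
  · refine Or.inr ⟨?_, ?_⟩
    · exact (psat_subst2 α .fls v F').2 (psat_update_in F' v α False
        (fun b _ => ⟨fun _ hva' => hva hva', fun _ hc => hc.elim⟩) hv)
    · show psat (if allowA F G α false then .neg (lit α) else .tru) v
      split_ifs with h
      · exact hva
      · trivial

lemma step_entails (F G : Fml) (α : Atom) (F' : Fml)
    (hent : ∀ v, psat F' v → psat G v)
    (hPF : F'.apreds true ⊆ PF F) (v : Val)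
    (hv : psat (stepF F G α F') v) : psat G v := by
  have hv' : (psat (subst2 α .tru F') v ∧ psat (if allowA F G α true then lit α else .tru) v) ∨
      (psat (subst2 α .fls F') v ∧ psat (if allowA F G α false then .neg (lit α) else .tru) v) := hv
  rcases hv' with ⟨h1, h2⟩ | ⟨h1, h2⟩
  · have hup : psat F' (Function.update v α True) := (psat_subst2 α .tru v F').1 h1
    by_cases hA : allowA F G α true
    · rw [if_pos hA] at h2
      exact hent v (psat_update_out F' v α True
        (fun b _ => ⟨fun _ _ => h2, fun _ _ => trivial⟩) hup)
    · by_cases hG1 : (α.1, true) ∈ G.pred ∧ afuns α ⊆ G.funs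
      · have hF1 : ¬ ((α.1, true) ∈ F.pred ∧ afuns α ⊆ F.funs) := fun hF1 => hA ⟨hF1, hG1⟩
        have hnot : ((α, true) : Atom × Bool) ∉ F'.apreds true := fun hmem => hF1 (hPF hmem)
        exact hent v (psat_update_out F' v α True
          (fun b hb => ⟨fun hbt => absurd (hbt ▸ hb) hnot, fun _ _ => trivial⟩) hup)
      · have hnot : ((α, true) : Atom × Bool) ∉ G.apreds true := fun hmem =>
          hG1 ⟨apreds_pred G true _ hmem, apreds_funs G true _ hmem⟩
        exact psat_update_out G v α True
          (fun b hb => ⟨fun hbt => absurd (hbt ▸ hb) hnot, fun _ _ => trivial⟩)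
          (hent _ hup)
  · have hup : psat F' (Function.update v α False) := (psat_subst2 α .fls v F').1 h1
    by_cases hA : allowA F G α false
    · rw [if_pos hA] at h2
      exact hent v (psat_update_out F' v α False
        (fun b _ => ⟨fun _ hc => hc.elim, fun _ hva => (h2 hva).elim⟩) hup)
    · by_cases hG1 : (α.1, false) ∈ G.pred ∧ afuns α ⊆ G.funs
      · have hF1 : ¬ ((α.1, false) ∈ F.pred ∧ afuns α ⊆ F.funs) := fun hF1 => hA ⟨hF1, hG1⟩
        have hnot : ((α, false) : Atom × Bool) ∉ F'.apreds true := fun hmem => hF1 (hPF hmem)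
        exact hent v (psat_update_out F' v α False
          (fun b hb => ⟨fun _ hc => hc.elim, fun hbf => absurd (hbf ▸ hb) hnot⟩) hup)
      · have hnot : ((α, false) : Atom × Bool) ∉ G.apreds true := fun hmem =>
          hG1 ⟨apreds_pred G true _ hmem, apreds_funs G true _ hmem⟩
        exact psat_update_out G v α False
          (fun b hb => ⟨fun _ hc => hc.elim, fun hbf => absurd (hbf ▸ hb) hnot⟩)
          (hent _ hup)

lemma step_isQF (F G : Fml) (α : Atom) (F' : Fml) (h : F'.isQF) :
    (stepF F G α F').isQF := by
  refine ⟨⟨isQF_subst2 α .tru (Or.inl rfl) F' h, ?_⟩,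
          ⟨isQF_subst2 α .fls (Or.inr rfl) F' h, ?_⟩⟩
  · show (if allowA F G α true then lit α else Fml.tru).isQF
    split_ifs <;> trivial
  · show (if allowA F G α false then Fml.neg (lit α) else Fml.tru).isQF
    split_ifs <;> trivial

lemma step_free (F G : Fml) (α : Atom) (F' : Fml) :
    (stepF F G α F').free ⊆ F'.free ∪ avars α := by
  have hlit : (lit α).free = avars α := rfl
  have h1 : (if allowA F G α true then lit α else Fml.tru).free ⊆ avars α := by
    split_ifs
    · exact hlit.le
    · exact Set.empty_subset _
  have h2 : (if allowA F G α false then Fml.neg (lit α) else Fml.tru).free ⊆ avars α := by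
    split_ifs
    · exact hlit.le
    · exact Set.empty_subset _
  show (subst2 α .tru F').free ∪ _ ∪ ((subst2 α .fls F').free ∪ _) ⊆ _
  refine Set.union_subset (Set.union_subset ?_ ?_) (Set.union_subset ?_ ?_)
  · exact (free_subst2 α .tru (Or.inl rfl) F').trans Set.subset_union_left
  · exact h1.trans Set.subset_union_right
  · exact (free_subst2 α .fls (Or.inr rfl) F').trans Set.subset_union_left
  · exact h2.trans Set.subset_union_right

lemma step_apreds (F G : Fml) (α : Atom) (F' : Fml) :
    (stepF F G α F').apreds true ⊆ {x ∈ F'.apreds true | x.1 ≠ α} ∪ GoodA F G := by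
  intro x hx
  have hx' : x ∈ (subst2 α .tru F').apreds true ∪
      (if allowA F G α true then lit α else Fml.tru).apreds true ∪
      ((subst2 α .fls F').apreds true ∪
      (if allowA F G α false then Fml.neg (lit α) else Fml.tru).apreds true) := hx
  rcases hx' with (h | h) | (h | h)
  · exact Or.inl (apreds_subst2 α .tru (Or.inl rfl) F' true h)
  · by_cases hA : allowA F G α true
    · rw [if_pos hA] at h
      rcases h with rfl
      exact Or.inr hA
    · rw [if_neg hA] at h
      exact absurd h (Set.notMem_empty x)
  · exact Or.inl (apreds_subst2 α .fls (Or.inr rfl) F' true h)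
  · by_cases hA : allowA F G α false
    · rw [if_pos hA] at h
      rcases h with rfl
      exact Or.inr hA
    · rw [if_neg hA] at h
      exact absurd h (Set.notMem_empty x)

lemma GoodA_sub_PF (F G : Fml) : GoodA F G ⊆ PF F := fun x hx => hx.1

lemma elim_spec (F G : Fml) : ∀ (L : List Atom) (F' : Fml),
    F'.isQF → F'.free = ∅ → (∀ v, psat F' v → psat G v) → F'.apreds true ⊆ PF F →
    (∀ α ∈ L, avars α = ∅) →
    (elimA F G L F').isQF ∧ (elimA F G L F').free = ∅ ∧
    (∀ v, psat F' v → psat (elimA F G L F') v) ∧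
    (∀ v, psat (elimA F G L F') v → psat G v) ∧
    (elimA F G L F').apreds true ⊆ GoodA F G ∪ {x ∈ F'.apreds true | x.1 ∉ L} := by
  intro L
  induction L with
  | nil =>
      intro F' h1 h2 h3 h4 _
      exact ⟨h1, h2, fun _ => id, h3, fun x hx => Or.inr ⟨hx, List.not_mem_nil (a := x.1)⟩⟩
  | cons α L ih =>
      intro F' h1 h2 h3 h4 h5
      have hαv : avars α = ∅ := h5 α (List.mem_cons_self (a := α) (l := L))
      have hS1 : (stepF F G α F').isQF := step_isQF F G α F' h1
      have hS2 : (stepF F G α F').free = ∅ := by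
        apply Set.eq_empty_of_subset_empty
        calc (stepF F G α F').free ⊆ F'.free ∪ avars α := step_free F G α F'
          _ = ∅ := by rw [h2, hαv, Set.union_empty]
      have hS3 : ∀ v, psat (stepF F G α F') v → psat G v :=
        fun v => step_entails F G α F' h3 h4 v
      have hSp := step_apreds F G α F'
      have hS4 : (stepF F G α F').apreds true ⊆ PF F := by
        intro x hx
        rcases hSp hx with h | h
        · exact h4 h.1
        · exact GoodA_sub_PF F G h
      have := ih (stepF F G α F') hS1 hS2 hS3 hS4 (fun β hβ => h5 β (List.mem_cons_of_mem α hβ))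
      refine ⟨this.1, this.2.1, ?_, this.2.2.2.1, ?_⟩
      · intro v hv
        exact this.2.2.1 v (step_sound F G α F' v hv)
      · intro x hx
        rcases this.2.2.2.2 hx with h | h
        · exact Or.inl h
        · rcases hSp h.1 with h' | h'
          · refine Or.inr ⟨h'.1, ?_⟩
            intro hmem
            rcases List.mem_cons.1 hmem with he | he
            · exact h'.2 he
            · exact h.2 he
          · exact Or.inl h'



/-- Craig-Lyndon interpolation for ground formulas. For all ground
first-order formulas `F` and `G` without equality with F ⊨ G there exists a ground
Craig-Lyndon interpolant `H` of `F` and `G`. -/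
theorem statement2 (F G : Fml) (hF : F.isGround) (hG : G.isGround) (h : entails F G) :
    ∃ H : Fml, H.isGround ∧
      entails F H ∧ entails H G ∧
      H.pred ⊆ F.pred ∩ G.pred ∧
      H.funs ⊆ F.funs ∩ G.funs := by
  obtain ⟨hFqf, hFfree⟩ := hF
  obtain ⟨hGqf, hGfree⟩ := hG
  have hpent : ∀ v, psat F v → psat G v := (entails_iff_pentails F G hFqf hGqf).1 h
  have hPF : F.apreds true ⊆ PF F := fun x hx =>
    ⟨apreds_pred F true x hx, apreds_funs F true x hx⟩
  have hL : ∀ α ∈ F.atomsL, avars α = ∅ := fun α hα =>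
    Set.eq_empty_of_subset_empty (hFfree ▸ atomsL_vars F hFqf α hα)
  obtain ⟨hQ, hfr, hs, he, hap⟩ := elim_spec F G F.atomsL F hFqf hFfree hpent hPF hL
  set H := elimA F G F.atomsL F with hH
  have hGood : H.apreds true ⊆ GoodA F G := by
    intro x hx
    rcases hap hx with hg | hg
    · exact hg
    · exact absurd (apreds_atomsL F true x hg.1) hg.2
  refine ⟨H, ⟨hQ, hfr⟩, ?_, ?_, ?_, ?_⟩
  · exact (entails_iff_pentails F H hFqf hQ).2 hs
  · exact (entails_iff_pentails H G hQ hGqf).2 he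
  · intro y hy
    obtain ⟨n, ts, hmem⟩ := preds_exists H true y.1 y.2 hy
    have hg := hGood hmem
    exact ⟨hg.1.1, hg.2.1⟩
  · intro y hy
    obtain ⟨x, hmem, hyx⟩ := funs_exists H true y hy
    have hg := hGood hmem
    exact ⟨hg.1.2 hyx, hg.2.2 hyx⟩

end CTIF
end

section
/- A first-order sentence S of the form ∀X₁ C₁ ∧ … ∧ ∀Xₙ Cₙ, where the Xᵢ are finite sets of variables and the Cᵢ are quantifier-free formulas without equality, is unsatisfiable if and only if there exists a finite unsatisfiable conjunction of ground instances of formulas Cᵢ (i ∈ {1,…,n}), where the instances are obtained by instantiating all variables with ground terms formed from the function symbols occurring in S and, if no constant occurs in S, one additional fresh constant. -/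
open Classical

namespace CTIF

/-- Function symbols occurring in the quantifier-free parts of the sentence
∀X₁ C₁ ∧ … ∧ ∀Xₙ Cₙ, represented as the list of pairs (Xᵢ, Cᵢ). -/
def funsPS (ps : List (List ℕ × Fml)) : Set (ℕ × ℕ) := {fn | ∃ p ∈ ps, fn ∈ p.2.funs}


section HerbrandAux

/-- Literal (propositional) satisfaction of a quantifier-free formula under a
valuation of atoms. -/
def LitSat (v : ℕ → ∀ n, (Fin n → Tm) → Prop) : Fml → Prop
  | .tru => True
  | .fls => False
  | .atom p n ts => v p n ts
  | .neg F => ¬ LitSat v F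
  | .conj F G => LitSat v F ∧ LitSat v G
  | .disj F G => LitSat v F ∨ LitSat v G
  | .all _ F => LitSat v F
  | .exi _ F => LitSat v F

lemma eval_subst {D : Type} (M : Struc D) (a : ℕ → D) (θ : Subst) :
    ∀ t : Tm, (t.subst θ).eval M a = t.eval M (fun x => (θ x).eval M a)
  | .var _ => rfl
  | .app f n ts => by
      simp only [Tm.subst, Tm.eval]
      congr 1
      funext i
      exact eval_subst M a θ (ts i)

lemma sat_subst {D : Type} (M : Struc D) (a : ℕ → D) (θ : Subst) :
    ∀ F : Fml, F.isQF → ((F.subst θ).sat M a ↔ F.sat M (fun x => (θ x).eval M a))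
  | .tru, _ => Iff.rfl
  | .fls, _ => Iff.rfl
  | .atom p n ts, _ => by
      show M.pr p n (fun i => ((ts i).subst θ).eval M a) ↔
        M.pr p n (fun i => (ts i).eval M (fun x => (θ x).eval M a))
      rw [show (fun i => ((ts i).subst θ).eval M a)
            = fun i => (ts i).eval M (fun x => (θ x).eval M a) from
          funext fun i => eval_subst M a θ (ts i)]
  | .neg F, h => by
      simp only [Fml.subst, Fml.sat]
      exact not_congr (sat_subst M a θ F h)
  | .conj F G, h => by
      simp only [Fml.subst, Fml.sat]
      exact and_congr (sat_subst M a θ F h.1) (sat_subst M a θ G h.2)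
  | .disj F G, h => by
      simp only [Fml.subst, Fml.sat]
      exact or_congr (sat_subst M a θ F h.1) (sat_subst M a θ G h.2)
  | .all _ _, h => absurd h (by simp [Fml.isQF])
  | .exi _ _, h => absurd h (by simp [Fml.isQF])

lemma isQF_subst (θ : Subst) : ∀ F : Fml, F.isQF → (F.subst θ).isQF
  | .tru, _ => trivial
  | .fls, _ => trivial
  | .atom _ _ _, _ => trivial
  | .neg F, h => isQF_subst θ F h
  | .conj F G, h => ⟨isQF_subst θ F h.1, isQF_subst θ G h.2⟩
  | .disj F G, h => ⟨isQF_subst θ F h.1, isQF_subst θ G h.2⟩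
  | .all _ _, h => absurd h (by simp [Fml.isQF])
  | .exi _ _, h => absurd h (by simp [Fml.isQF])

/-- All terms occurring (in atoms) in the formula are built from `S`. -/
def TBF (S : Set (ℕ × ℕ)) : Fml → Prop
  | .tru => True
  | .fls => True
  | .atom _ _ ts => ∀ i, (ts i).builtFrom S
  | .neg F => TBF S F
  | .conj F G => TBF S F ∧ TBF S G
  | .disj F G => TBF S F ∧ TBF S G
  | .all _ F => TBF S F
  | .exi _ F => TBF S F

lemma builtFrom_subst (S : Set (ℕ × ℕ)) (θ : Subst) :
    ∀ t : Tm, t.funs ⊆ S → (∀ x ∈ t.vars, (θ x).builtFrom S) → (t.subst θ).builtFrom S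
  | .var x, _, hv => hv x (by simp [Tm.vars])
  | .app f n ts, hf, hv => by
      refine ⟨hf (by simp [Tm.funs]), fun i => builtFrom_subst S θ (ts i) ?_ ?_⟩
      · intro y hy
        exact hf (by simp only [Tm.funs, Set.mem_insert_iff, Set.mem_iUnion]
                     exact Or.inr ⟨i, hy⟩)
      · intro x hx
        exact hv x (by simp only [Tm.vars, Set.mem_iUnion]; exact ⟨i, hx⟩)

lemma TBF_subst (S : Set (ℕ × ℕ)) (θ : Subst) :
    ∀ F : Fml, F.isQF → F.funs ⊆ S → (∀ x ∈ F.free, (θ x).builtFrom S) →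
      TBF S (F.subst θ)
  | .tru, _, _, _ => trivial
  | .fls, _, _, _ => trivial
  | .atom p n ts, _, hf, hv => fun i =>
      builtFrom_subst S θ (ts i)
        (fun y hy => hf (Set.mem_iUnion.2 ⟨i, hy⟩))
        (fun x hx => hv x (Set.mem_iUnion.2 ⟨i, hx⟩))
  | .neg F, h, hf, hv => TBF_subst S θ F h hf hv
  | .conj F G, h, hf, hv =>
      ⟨TBF_subst S θ F h.1 (fun y hy => hf (Set.mem_union_left _ hy))
        (fun x hx => hv x (Set.mem_union_left _ hx)),
       TBF_subst S θ G h.2 (fun y hy => hf (Set.mem_union_right _ hy))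
        (fun x hx => hv x (Set.mem_union_right _ hx))⟩
  | .disj F G, h, hf, hv =>
      ⟨TBF_subst S θ F h.1 (fun y hy => hf (Set.mem_union_left _ hy))
        (fun x hx => hv x (Set.mem_union_left _ hx)),
       TBF_subst S θ G h.2 (fun y hy => hf (Set.mem_union_right _ hy))
        (fun x hx => hv x (Set.mem_union_right _ hx))⟩
  | .all _ _, h, _, _ => absurd h (by simp [Fml.isQF])
  | .exi _ _, h, _, _ => absurd h (by simp [Fml.isQF])

/-- The Herbrand structure over ground terms built from `S`, with predicate
interpretation given by a valuation `v`. -/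
noncomputable def HStruc (S : Set (ℕ × ℕ)) (d0 : {t : Tm // t.builtFrom S})
    (v : ℕ → ∀ n, (Fin n → Tm) → Prop) : Struc {t : Tm // t.builtFrom S} where
  fn f n args :=
    if h : (f, n) ∈ S then ⟨.app f n (fun i => (args i).1), h, fun i => (args i).2⟩ else d0
  pr p n args := v p n (fun i => (args i).1)

lemma eval_ground (S : Set (ℕ × ℕ)) (d0 : {t : Tm // t.builtFrom S})
    (v : ℕ → ∀ n, (Fin n → Tm) → Prop) :
    ∀ (t : Tm) (ht : t.builtFrom S) (a : ℕ → {t : Tm // t.builtFrom S}),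
      t.eval (HStruc S d0 v) a = ⟨t, ht⟩
  | .var _, ht, _ => absurd ht (by simp [Tm.builtFrom])
  | .app f n ts, ht, a => by
      show (HStruc S d0 v).fn f n (fun i => (ts i).eval (HStruc S d0 v) a) = _
      rw [show (fun i => (ts i).eval (HStruc S d0 v) a)
            = (fun i => (⟨ts i, ht.2 i⟩ : {t : Tm // t.builtFrom S})) from
          funext fun i => eval_ground S d0 v (ts i) (ht.2 i) a]
      show dite _ _ _ = _
      rw [dif_pos ht.1]

lemma sat_HStruc (S : Set (ℕ × ℕ)) (d0 : {t : Tm // t.builtFrom S})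
    (v : ℕ → ∀ n, (Fin n → Tm) → Prop) :
    ∀ (F : Fml), F.isQF → TBF S F → ∀ a, (F.sat (HStruc S d0 v) a ↔ LitSat v F)
  | .tru, _, _, _ => Iff.rfl
  | .fls, _, _, _ => Iff.rfl
  | .atom p n ts, _, hT, a => by
      show v p n (fun i => ((ts i).eval (HStruc S d0 v) a).1) ↔ v p n ts
      rw [show (fun i => ((ts i).eval (HStruc S d0 v) a).1) = ts from
          funext fun i => by rw [eval_ground S d0 v (ts i) (hT i) a]]
  | .neg F, h, hT, a => by
      simp only [Fml.sat, LitSat]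
      exact not_congr (sat_HStruc S d0 v F h hT a)
  | .conj F G, h, hT, a => by
      simp only [Fml.sat, LitSat]
      exact and_congr (sat_HStruc S d0 v F h.1 hT.1 a) (sat_HStruc S d0 v G h.2 hT.2 a)
  | .disj F G, h, hT, a => by
      simp only [Fml.sat, LitSat]
      exact or_congr (sat_HStruc S d0 v F h.1 hT.1 a) (sat_HStruc S d0 v G h.2 hT.2 a)
  | .all _ _, h, _, _ => absurd h (by simp [Fml.isQF])
  | .exi _ _, h, _, _ => absurd h (by simp [Fml.isQF])

lemma sat_litsat {D : Type} (M : Struc D) (a : ℕ → D) :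
    ∀ F : Fml, F.isQF →
      (F.sat M a ↔ LitSat (fun p n ts => M.pr p n (fun i => (ts i).eval M a)) F)
  | .tru, _ => Iff.rfl
  | .fls, _ => Iff.rfl
  | .atom p n ts, _ => Iff.rfl
  | .neg F, h => by
      simp only [Fml.sat, LitSat]
      exact not_congr (sat_litsat M a F h)
  | .conj F G, h => by
      simp only [Fml.sat, LitSat]
      exact and_congr (sat_litsat M a F h.1) (sat_litsat M a G h.2)
  | .disj F G, h => by
      simp only [Fml.sat, LitSat]
      exact or_congr (sat_litsat M a F h.1) (sat_litsat M a G h.2)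
  | .all _ _, h => absurd h (by simp [Fml.isQF])
  | .exi _ _, h => absurd h (by simp [Fml.isQF])

lemma litsat_ultra {I : Type} (U : Ultrafilter I) (w : I → ℕ → ∀ n, (Fin n → Tm) → Prop) :
    ∀ F : Fml, F.isQF →
      (LitSat (fun p n ts => {L | w L p n ts} ∈ U) F ↔ {L | LitSat (w L) F} ∈ U)
  | .tru, _ => by
      simp only [LitSat]
      exact iff_of_true trivial (by rw [Set.setOf_true]; exact Filter.univ_mem)
  | .fls, _ => by
      simp only [LitSat]
      exact iff_of_false (fun h => h)
        (by rw [Set.setOf_false]; exact Filter.empty_notMem (U : Filter I))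
  | .atom p n ts, _ => Iff.rfl
  | .neg F, h => by
      simp only [LitSat]
      rw [not_congr (litsat_ultra U w F h)]
      rw [show {L | ¬ LitSat (w L) F} = {L | LitSat (w L) F}ᶜ from rfl]
      exact Ultrafilter.compl_mem_iff_notMem.symm
  | .conj F G, h => by
      simp only [LitSat]
      rw [and_congr (litsat_ultra U w F h.1) (litsat_ultra U w G h.2)]
      rw [show {L | LitSat (w L) F ∧ LitSat (w L) G}
            = {L | LitSat (w L) F} ∩ {L | LitSat (w L) G} from rfl]
      exact Filter.inter_mem_iff.symm
  | .disj F G, h => by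
      simp only [LitSat]
      rw [or_congr (litsat_ultra U w F h.1) (litsat_ultra U w G h.2)]
      rw [show {L | LitSat (w L) F ∨ LitSat (w L) G}
            = {L | LitSat (w L) F} ∪ {L | LitSat (w L) G} from rfl]
      exact Ultrafilter.union_mem_iff.symm
  | .all _ _, h => absurd h (by simp [Fml.isQF])
  | .exi _ _, h => absurd h (by simp [Fml.isQF])

end HerbrandAux

/-- A form of Herbrand's theorem. A sentence S = ∀X₁ C₁ ∧ … ∧ ∀Xₙ Cₙ
(Cᵢ quantifier-free, without equality) is unsatisfiable iff there is a finite
unsatisfiable conjunction of ground instances of the Cᵢ, instantiated with ground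
terms over the function symbols of S (plus a fresh constant c₀ if no constant
occurs in S). -/
theorem statement9 (ps : List (List ℕ × Fml)) (c₀ : ℕ)
    (hqf : ∀ p ∈ ps, p.2.isQF)
    (hsent : ∀ p ∈ ps, p.2.free ⊆ {x | x ∈ p.1})
    (hfresh : (c₀, 0) ∉ funsPS ps) :
    (∀ (D : Type), Nonempty D → ∀ M : Struc D, ¬ ∀ p ∈ ps, ∀ a : ℕ → D, p.2.sat M a)
    ↔
    (∃ L : List Fml,
      (∀ H ∈ L, ∃ p ∈ ps, ∃ θ : Subst,
        (∀ x ∈ p.2.free,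
          (θ x).builtFrom (funsPS ps ∪
            (if ∃ f, (f, 0) ∈ funsPS ps then ∅ else {(c₀, 0)}))) ∧
        H = p.2.subst θ) ∧
      (∀ (D : Type), Nonempty D → ∀ (M : Struc D) (a : ℕ → D), ¬ ∀ H ∈ L, H.sat M a)) := by
  classical
  set S : Set (ℕ × ℕ) :=
    funsPS ps ∪ (if ∃ f, (f, 0) ∈ funsPS ps then ∅ else {(c₀, 0)}) with hSdef
  obtain ⟨c, hc⟩ : ∃ c, (c, 0) ∈ S := by
    by_cases h : ∃ f, (f, 0) ∈ funsPS ps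
    · exact ⟨h.choose, Set.mem_union_left _ h.choose_spec⟩
    · refine ⟨c₀, Set.mem_union_right _ ?_⟩
      rw [if_neg h]; rfl
  have hd0 : (Tm.app c 0 (fun i => i.elim0)).builtFrom S := ⟨hc, fun i => i.elim0⟩
  set d0 : {t : Tm // t.builtFrom S} := ⟨_, hd0⟩ with hd0def
  constructor
  · -- unsatisfiable ⇒ finite unsatisfiable set of ground instances
    intro hL
    by_contra hR
    push_neg at hR
    -- the type of "lists of ground instances"
    set Inst : Fml → Prop := fun H => ∃ p ∈ ps, ∃ θ : Subst,
      (∀ x ∈ p.2.free, (θ x).builtFrom S) ∧ H = p.2.subst θ with hInst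
    set I : Type := {L : List Fml // ∀ H ∈ L, Inst H} with hI
    -- each such list has a satisfying valuation
    have key : ∀ L : I, ∃ v : ℕ → ∀ n, (Fin n → Tm) → Prop,
        ∀ H ∈ L.1, LitSat v H := by
      intro L
      obtain ⟨D, hD, M, a, hsat⟩ := hR L.1 L.2
      refine ⟨fun p n ts => M.pr p n (fun i => (ts i).eval M a), fun H hH => ?_⟩
      obtain ⟨p, hp, θ, hθ, rfl⟩ := L.2 H hH
      exact (sat_litsat M a _ (isQF_subst θ p.2 (hqf p hp))).1 (hsat _ hH)
    choose w hw using key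
    -- filter generated by the sets {L | H ∈ L}
    set Sgen : Set (Set I) := {B | ∃ H, Inst H ∧ B = {L : I | H ∈ L.1}} with hSgen
    have hfip : ∀ t : Set (Set I), t.Finite → t ⊆ Sgen → ∃ L : I, ∀ B ∈ t, L ∈ B := by
      intro t ht
      refine Set.Finite.induction_on (motive := fun t _ => t ⊆ Sgen → ∃ L : I, ∀ B ∈ t, L ∈ B) t ht ?_ ?_
      · exact fun _ => ⟨⟨[], by simp⟩, by simp⟩
      · intro B t' _ _ IH hsub
        obtain ⟨L, hL⟩ := IH (fun x hx => hsub (Set.mem_insert_of_mem _ hx))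
        obtain ⟨H, hHinst, rfl⟩ := hsub (Set.mem_insert _ _)
        refine ⟨⟨H :: L.1, ?_⟩, ?_⟩
        · intro H' hH'
          rw [List.mem_cons] at hH'
          rcases hH' with rfl | h
          · exact hHinst
          · exact L.2 H' h
        · intro B hB
          rcases hB with rfl | hB
          · exact List.mem_cons_self
          · obtain ⟨H', _, rfl⟩ := hsub (Set.mem_insert_of_mem _ hB)
            exact List.mem_cons_of_mem _ (hL _ hB)
    have hne : (Filter.generate Sgen).NeBot := by
      rw [Filter.generate_neBot_iff]
      intro t hts htf
      obtain ⟨L, hL⟩ := hfip t htf hts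
      exact ⟨L, fun B hB => hL B hB⟩
    let U : Ultrafilter I := Ultrafilter.of (Filter.generate Sgen)
    set v : ℕ → ∀ n, (Fin n → Tm) → Prop :=
      fun p n ts => {L : I | w L p n ts} ∈ U with hv
    -- every ground instance is true under the limit valuation
    have hInstSat : ∀ H : Fml, Inst H → H.isQF → LitSat v H := by
      intro H hHinst hHqf
      have hBH : {L : I | H ∈ L.1} ∈ U :=
        Ultrafilter.of_le _ (Filter.mem_generate_of_mem ⟨H, hHinst, rfl⟩)
      have hmem : {L : I | LitSat (w L) H} ∈ U :=
        Filter.mem_of_superset hBH (fun L hL => hw L H hL)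
      exact (litsat_ultra U w H hHqf).2 hmem
    -- the Herbrand model
    set Mstar := HStruc S d0 v with hMstar
    have hM : ∀ p ∈ ps, ∀ a : ℕ → {t : Tm // t.builtFrom S}, p.2.sat Mstar a := by
      intro p hp a
      set θ : Subst := fun x => (a x).1 with hθ
      have hqfp := hqf p hp
      have hinst : Inst (p.2.subst θ) := ⟨p, hp, θ, fun x _ => (a x).2, rfl⟩
      have hQF := isQF_subst θ p.2 hqfp
      have hTBF : TBF S (p.2.subst θ) :=
        TBF_subst S θ p.2 hqfp
          (fun y hy => Set.mem_union_left _ ⟨p, hp, hy⟩)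
          (fun x _ => (a x).2)
      have hls : LitSat v (p.2.subst θ) := hInstSat _ hinst hQF
      have hsat : (p.2.subst θ).sat Mstar a := (sat_HStruc S d0 v _ hQF hTBF a).2 hls
      have h2 := (sat_subst Mstar a θ p.2 hqfp).1 hsat
      have h3 : (fun x => (θ x).eval Mstar a) = a := funext fun x =>
        (eval_ground S d0 v ((a x).1) (a x).2 a)
      rwa [h3] at h2
    exact absurd hM (hL _ ⟨d0⟩ Mstar)
  · -- finite unsatisfiable set of ground instances ⇒ unsatisfiable
    rintro ⟨L, hinst, huns⟩ D hD M hM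
    apply huns D hD M (fun _ => hD.some)
    intro H hH
    obtain ⟨p, hp, θ, hθ, rfl⟩ := hinst H hH
    exact (sat_subst M _ θ p.2 (hqf p hp)).2 (hM p hp _)


end CTIF
end
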